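/- Let q be a prime power and n ≥ 1. For m | n, let U(m) denote the set of β ∈ F_{q^m} of degree exactly m over F_q such that r_β(x) = g(x) − β·h(x) is an irreducible quadratic over F_{q^m}, where g, h ∈ F_q[x] are fixed coprime polynomials with max(deg g, deg h) = 2. Let Ū(n) be the set of β ∈ F_{q^n} with r_β irreducible and quadratic over F_{q^n}. Then #Ū(n) = ∑_{d | n, d odd} #U(n/d). -/

import Mathlib

open Polynomial

open IntermediateField

section helpers
variable {F E : Type*} [Field F] [Field E] [Algebra F E]

lemma subfield_le' [Fintype E] (K₁ K₂ : IntermediateField F E)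
    (h : Nat.card K₁ = Nat.card K₂) : K₁ ≤ K₂ := by
  classical
  letI : Fintype K₁ := Fintype.ofFinite _
  letI : Fintype K₂ := Fintype.ofFinite _
  set Q := Nat.card K₂ with hQ
  have hQ1 : Q = Fintype.card K₂ := Nat.card_eq_fintype_card
  have hQ2 : 1 < Q := by rw [hQ1]; exact Fintype.one_lt_card
  set P : E[X] := X ^ Q - X with hP
  have hP0 : P ≠ 0 := FiniteField.X_pow_card_sub_X_ne_zero E hQ2
  have hPdeg : P.natDegree = Q := FiniteField.X_pow_card_sub_X_natDegree_eq E hQ2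
  have root_of_mem : ∀ (K : IntermediateField F E) [Fintype K], Nat.card K = Q →
      ∀ x ∈ K, P.IsRoot x := by
    intro K _ hK x hx
    have : (⟨x, hx⟩ : K) ^ Q = ⟨x, hx⟩ := by
      rw [← Nat.card_eq_fintype_card.symm.trans hK]
      exact FiniteField.pow_card _
    have := congrArg (Subtype.val) this
    push_cast at this
    simp [hP, IsRoot, this]
  set S : Finset E := Finset.univ.image (Subtype.val : K₂ → E) with hS
  have hmemS : ∀ x : E, x ∈ S ↔ x ∈ K₂ := by
    intro x
    simp only [hS, Finset.mem_image, Finset.mem_univ, true_and, Subtype.exists,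
      exists_prop, exists_eq_right]
  have hsub : S ⊆ P.roots.toFinset := by
    intro x hx
    rw [Multiset.mem_toFinset, mem_roots hP0]
    exact root_of_mem K₂ rfl x ((hmemS x).mp hx)
  have hcard : P.roots.toFinset.card ≤ S.card := by
    calc P.roots.toFinset.card ≤ Multiset.card P.roots := Multiset.toFinset_card_le _
    _ ≤ P.natDegree := P.card_roots'
    _ = Q := hPdeg
    _ = S.card := by
        rw [hS, Finset.card_image_of_injective _ Subtype.val_injective, Finset.card_univ, hQ1]
  have heq : S = P.roots.toFinset := Finset.eq_of_subset_of_card_le hsub hcard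
  intro x hx
  have hroot : P.IsRoot x := root_of_mem K₁ h x hx
  have : x ∈ P.roots.toFinset := by rw [Multiset.mem_toFinset, mem_roots hP0]; exact hroot
  rw [← heq] at this
  exact (hmemS x).mp this
end helpers

lemma Xpow_dvd_Xpow' {K : Type*} [CommRing K] {a b : ℕ} (ha : 0 < a) (hb : 0 < b)
    (h : a - 1 ∣ b - 1) : (X ^ a - X : K[X]) ∣ X ^ b - X := by
  obtain ⟨k, hk⟩ := h
  have h1 : (X ^ a - X : K[X]) = X * (X ^ (a - 1) - 1) := by
    rw [mul_sub, mul_one, ← pow_succ', Nat.sub_add_cancel ha]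
  have h2 : (X ^ b - X : K[X]) = X * (X ^ (b - 1) - 1) := by
    rw [mul_sub, mul_one, ← pow_succ', Nat.sub_add_cancel hb]
  rw [h1, h2]
  apply mul_dvd_mul_left
  have h3 : (X ^ (b - 1) : K[X]) - 1 = (X ^ (a - 1)) ^ k - 1 ^ k := by
    rw [one_pow, ← pow_mul, ← hk]
  rw [h3]
  exact sub_dvd_pow_sub_pow _ _ _

lemma irred_map_iff' {K E : Type*} [Field K] [Fintype K] [Field E] [Fintype E] [Algebra K E]
    (p : K[X]) (hp : p.natDegree = 2) :
    Irreducible (p.map (algebraMap K E)) ↔ Irreducible p ∧ Odd (Module.finrank K E) := by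
  haveI : Module.Finite K E := Module.Finite.of_finite
  set Q := Fintype.card K with hQdef
  set N := Module.finrank K E with hN
  have hp0 : p ≠ 0 := fun h => by simp [h] at hp
  have hmapdeg : (p.map (algebraMap K E)).natDegree = 2 := by rw [natDegree_map]; exact hp
  have hmap0 : p.map (algebraMap K E) ≠ 0 := fun h => by simp [h] at hmapdeg
  have iff1 : Irreducible (p.map (algebraMap K E)) ↔ (p.map (algebraMap K E)).roots = 0 :=
    irreducible_iff_roots_eq_zero_of_degree_le_three (by omega) (by omega)
  have iff2 : Irreducible p ↔ p.roots = 0 :=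
    irreducible_iff_roots_eq_zero_of_degree_le_three (by omega) (by omega)
  have hEcard : Fintype.card E = Q ^ N := Module.card_eq_pow_finrank
  have hQ1 : 1 < Q := Fintype.one_lt_card
  constructor
  · intro hi
    have hirr : Irreducible p := by
      rw [iff2]
      rw [iff1] at hi
      by_contra hr
      obtain ⟨a, ha⟩ := Multiset.exists_mem_of_ne_zero hr
      have ha' : p.IsRoot a := (mem_roots hp0).mp ha
      have hm : (p.map (algebraMap K E)).IsRoot (algebraMap K E a) := by
        rw [IsRoot, eval_map, eval₂_hom, ha'.eq_zero, map_zero]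
      have : algebraMap K E a ∈ (p.map (algebraMap K E)).roots := (mem_roots hmap0).mpr hm
      rw [hi] at this
      simp at this
    refine ⟨hirr, ?_⟩
    by_contra hodd
    rw [← Nat.not_even_iff_odd, not_not, even_iff_two_dvd] at hodd
    haveI := Fact.mk hirr
    haveI : Module.Finite K (AdjoinRoot p) := (AdjoinRoot.powerBasis hp0).finite
    haveI : Finite (AdjoinRoot p) := Module.finite_iff_finite.mp ‹_›
    letI : Fintype (AdjoinRoot p) := Fintype.ofFinite _
    have hfr : Module.finrank K (AdjoinRoot p) = 2 := by
      rw [(AdjoinRoot.powerBasis hp0).finrank, AdjoinRoot.powerBasis_dim, hp]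
    have hcardA : Fintype.card (AdjoinRoot p) = Q ^ 2 := by
      rw [Module.card_eq_pow_finrank (K := K), hfr]
    have hroot : (AdjoinRoot.root p) ^ (Q ^ 2) = AdjoinRoot.root p := by
      rw [← hcardA]; exact FiniteField.pow_card _
    have haev : Polynomial.aeval (AdjoinRoot.root p) (X ^ (Q ^ 2) - X : K[X]) = 0 := by
      rw [map_sub, map_pow, aeval_X, hroot, sub_self]
    have hdvd1 : minpoly K (AdjoinRoot.root p) ∣ (X ^ (Q ^ 2) - X : K[X]) :=
      minpoly.dvd K _ haev
    have hpdvd : p ∣ (X ^ (Q ^ 2) - X : K[X]) := by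
      refine dvd_trans ?_ hdvd1
      rw [AdjoinRoot.minpoly_root hp0]
      exact dvd_mul_right p _
    have hsub : (Q ^ 2 - 1) ∣ (Q ^ N - 1) := by
      obtain ⟨k, hk⟩ := hodd
      have := Nat.sub_dvd_pow_sub_pow (Q ^ 2) 1 k
      rwa [one_pow, ← pow_mul, ← hk] at this
    have hchain : p ∣ (X ^ (Q ^ N) - X : K[X]) :=
      hpdvd.trans (Xpow_dvd_Xpow' (by positivity) (by positivity) hsub)
    have hdvdE : (p.map (algebraMap K E)) ∣ (X ^ (Fintype.card E) - X : E[X]) := by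
      have hm := Polynomial.map_dvd (algebraMap K E) hchain
      rwa [Polynomial.map_sub, Polynomial.map_pow, map_X, ← hEcard] at hm
    have hsplit : Splits (X ^ (Fintype.card E) - X : E[X]) := by
      rw [splits_iff_card_roots, FiniteField.roots_X_pow_card_sub_X, ← Finset.card_def,
        Finset.card_univ, FiniteField.X_pow_card_sub_X_natDegree_eq E Fintype.one_lt_card]
    have hsp : Splits (p.map (algebraMap K E)) :=
      Splits.of_dvd hsplit (FiniteField.X_pow_card_sub_X_ne_zero E Fintype.one_lt_card)
        hdvdE
    obtain ⟨x, hx⟩ := Splits.exists_eval_eq_zero hsp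
      (fun h0 => by rw [degree_eq_natDegree hmap0, hmapdeg] at h0; simp at h0)
    rw [iff1] at hi
    have : x ∈ (p.map (algebraMap K E)).roots := (mem_roots hmap0).mpr hx
    rw [hi] at this
    simp at this
  · rintro ⟨hirr, hodd⟩
    rw [iff1]
    by_contra hr
    obtain ⟨x, hx⟩ := Multiset.exists_mem_of_ne_zero hr
    have hx' : (p.map (algebraMap K E)).IsRoot x := (mem_roots hmap0).mp hx
    have haev : (Polynomial.aeval x) p = 0 := by rwa [aeval_def, ← eval_map]
    have hint : IsIntegral K x := IsIntegral.of_finite K x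
    obtain ⟨c, hc⟩ := minpoly.dvd K x haev
    have hc0 : c ≠ 0 := fun h => hp0 (by rw [hc, h, mul_zero])
    have hcu : IsUnit c :=
      (hirr.isUnit_or_isUnit hc).resolve_left (minpoly.not_isUnit K x)
    have hdeg2 : (minpoly K x).natDegree = 2 := by
      have h2 := congrArg natDegree hc
      rw [natDegree_mul (minpoly.ne_zero hint) hc0, natDegree_eq_zero_of_isUnit hcu,
        add_zero, hp] at h2
      omega
    have h2dvd : 2 ∣ N := by rw [← hdeg2, hN]; exact minpoly.degree_dvd hint
    rw [← Nat.not_even_iff_odd] at hodd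
    exact hodd (even_iff_two_dvd.mpr h2dvd)

/-- Counting relation `#Ū(n) = ∑_{d ∣ n, d odd} #U(n/d)`, where for `m ∣ n`,
`U(m)` is the set of `β ∈ F_{q^m}` of degree exactly `m` over `F_q` such that
`r_β = g - β h` is an irreducible quadratic over `F_{q^m}`, and `Ū(n)` is the set of
`β ∈ F_{q^n}` with `r_β` an irreducible quadratic over `F_{q^n}`.  Here `F_{q^m}` is
realised as the intermediate field `Km m` of `F_{q^n}/F_q` of degree `m`. -/
theorem card_Ubar_eq_sum_card_U (F E : Type*) [Field F] [Fintype F] [Field E] [Fintype E]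
    [Algebra F E] (q n : ℕ) (hn : 1 ≤ n) (hF : Fintype.card F = q)
    (hE : Fintype.card E = q ^ n)
    (g h : Polynomial F) (hcop : IsCoprime g h) (hdeg : max g.natDegree h.natDegree = 2)
    (Km : ℕ → IntermediateField F E) (hKm : ∀ m ∈ n.divisors, Module.finrank F (Km m) = m) :
    {β : E | ((g.map (algebraMap F E) - C β * h.map (algebraMap F E)).natDegree = 2) ∧
        Irreducible (g.map (algebraMap F E) - C β * h.map (algebraMap F E))}.ncard
      = ∑ d ∈ n.divisors.filter (fun d => Odd d),
          {β : Km (n / d) | (minpoly F (β : E)).natDegree = n / d ∧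
            ((g.map (algebraMap F (Km (n / d)))
                - C β * h.map (algebraMap F (Km (n / d)))).natDegree = 2) ∧
            Irreducible (g.map (algebraMap F (Km (n / d)))
                - C β * h.map (algebraMap F (Km (n / d))))}.ncard := by
  classical
  have hq1 : 1 < q := hF ▸ Fintype.one_lt_card
  haveI : Module.Finite F E := Module.Finite.of_finite
  have hfrE : Module.finrank F E = n := by
    have h1 : Fintype.card E = q ^ Module.finrank F E := by
      rw [Module.card_eq_pow_finrank (K := F), hF]
    exact Nat.pow_right_injective hq1 (h1.symm.trans hE)
  have hn0 : n ≠ 0 := by omega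
  set r : E → E[X] := fun β => g.map (algebraMap F E) - C β * h.map (algebraMap F E) with hr
  set S : Set E := {β : E | (r β).natDegree = 2 ∧ Irreducible (r β)} with hSdef
  set rK : ∀ (K : IntermediateField F E), K → Polynomial K :=
    fun K x => g.map (algebraMap F K) - C x * h.map (algebraMap F K) with hrK
  have hmapr : ∀ (K : IntermediateField F E) (x : K),
      r ↑x = (rK K x).map (algebraMap K E) := by
    intro K x
    simp only [hr, hrK, Polynomial.map_sub, Polynomial.map_mul, Polynomial.map_C,
      Polynomial.map_map, ← IsScalarTower.algebraMap_eq]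
    rfl
  set M : Finset ℕ := n.divisors.filter (fun m => Odd (n / m)) with hM
  set T : ℕ → Set E := fun m =>
    {β : E | (minpoly F β).natDegree = m ∧ (r β).natDegree = 2 ∧ Irreducible (r β)} with hT
  set U : ∀ m : ℕ, Set (Km m) := fun m =>
    {x : Km m | (minpoly F (x : E)).natDegree = m ∧ (rK (Km m) x).natDegree = 2 ∧
      Irreducible (rK (Km m) x)} with hU
  have hcardKm : ∀ m ∈ n.divisors, Nat.card (Km m) = q ^ m := by
    intro m hm
    letI : Fintype (Km m) := Fintype.ofFinite _
    rw [Nat.card_eq_fintype_card, Module.card_eq_pow_finrank (K := F), hF, hKm m hm]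
  have hfrKmE : ∀ m ∈ n.divisors, Module.finrank (Km m) E = n / m := by
    intro m hm
    have h1 : Module.finrank F (Km m) * Module.finrank (Km m) E = n := by
      rw [Module.finrank_mul_finrank, hfrE]
    rw [hKm m hm] at h1
    exact (Nat.div_eq_of_eq_mul_left (Nat.pos_of_mem_divisors hm) (by rw [mul_comm]; exact h1.symm)).symm
  have hmemKm : ∀ β : E, (minpoly F β).natDegree ∈ n.divisors →
      β ∈ Km ((minpoly F β).natDegree) := by
    intro β hm
    have hint : IsIntegral F β := IsIntegral.of_finite F β
    have hle : F⟮β⟯ ≤ Km ((minpoly F β).natDegree) := by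
      apply subfield_le'
      rw [hcardKm _ hm]
      letI : Fintype F⟮β⟯ := Fintype.ofFinite _
      rw [Nat.card_eq_fintype_card, Module.card_eq_pow_finrank (K := F), hF,
        IntermediateField.adjoin.finrank hint]
    exact hle (IntermediateField.mem_adjoin_simple_self F β)
  -- the key pointwise equivalence
  have hkey : ∀ m ∈ n.divisors, ∀ x : Km m, (rK (Km m) x).natDegree = 2 →
      (Irreducible (r ↑x) ↔ Irreducible (rK (Km m) x) ∧ Odd (n / m)) := by
    intro m hm x hx
    letI : Fintype (Km m) := Fintype.ofFinite _
    rw [hmapr (Km m) x, irred_map_iff' _ hx, hfrKmE m hm]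
  have hdegr : ∀ m : ℕ, ∀ x : Km m, (r ↑x).natDegree = (rK (Km m) x).natDegree := by
    intro m x
    rw [hmapr (Km m) x, natDegree_map]
  -- S is the union of the T m
  have hSU : S = ⋃ m ∈ M, T m := by
    ext β
    simp only [Set.mem_iUnion, exists_prop]
    constructor
    · rintro ⟨hd2, hirr⟩
      have hint : IsIntegral F β := IsIntegral.of_finite F β
      set m := (minpoly F β).natDegree with hm
      have hmdvd : m ∣ n := hfrE ▸ minpoly.degree_dvd hint
      have hmdiv : m ∈ n.divisors := Nat.mem_divisors.mpr ⟨hmdvd, hn0⟩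
      have hmem : β ∈ Km m := hmemKm β hmdiv
      have hx2 : (rK (Km m) ⟨β, hmem⟩).natDegree = 2 := by
        rw [← hdegr m ⟨β, hmem⟩]; exact hd2
      have hodd : Odd (n / m) :=
        ((hkey m hmdiv ⟨β, hmem⟩ hx2).mp hirr).2
      exact ⟨m, Finset.mem_filter.mpr ⟨hmdiv, hodd⟩, rfl, hd2, hirr⟩
    · rintro ⟨m, _, _, hd2, hirr⟩
      exact ⟨hd2, hirr⟩
  -- T m is the image of U m
  have hTU : ∀ m ∈ M, T m = (Subtype.val : Km m → E) '' U m := by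
    intro m hmM
    have hmdiv : m ∈ n.divisors := (Finset.mem_filter.mp hmM).1
    have hodd : Odd (n / m) := (Finset.mem_filter.mp hmM).2
    ext β
    constructor
    · rintro ⟨hmβ, hd2, hirr⟩
      have hmem : β ∈ Km m := hmβ ▸ hmemKm β (hmβ ▸ hmdiv)
      refine ⟨⟨β, hmem⟩, ⟨hmβ, ?_, ?_⟩, rfl⟩
      · rw [← hdegr m ⟨β, hmem⟩]; exact hd2
      · exact ((hkey m hmdiv ⟨β, hmem⟩ (by rw [← hdegr m ⟨β, hmem⟩]; exact hd2)).mp hirr).1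
    · rintro ⟨x, ⟨hmx, hd2, hirr⟩, rfl⟩
      refine ⟨hmx, ?_, ?_⟩
      · rw [hdegr m x]; exact hd2
      · exact (hkey m hmdiv x hd2).mpr ⟨hirr, hodd⟩
  -- card of S as a sum
  have hcards : S.ncard = ∑ m ∈ M, (T m).ncard := by
    have hfin : ∀ m : ℕ, (T m).Finite := fun m => Set.toFinite _
    have hSfin : S.Finite := Set.toFinite _
    rw [Set.ncard_eq_toFinset_card S hSfin]
    have hft : hSfin.toFinset = M.biUnion (fun m => (hfin m).toFinset) := by
      ext β
      simp only [Set.Finite.mem_toFinset, Finset.mem_biUnion, hSU, Set.mem_iUnion, exists_prop]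
    rw [hft, Finset.card_biUnion]
    · exact Finset.sum_congr rfl fun m _ => (Set.ncard_eq_toFinset_card _ (hfin m)).symm
    · intro m₁ _ m₂ _ hne
      rw [Function.onFun, Finset.disjoint_left]
      intro β hβ₁ hβ₂
      rw [Set.Finite.mem_toFinset] at hβ₁ hβ₂
      exact hne (hβ₁.1.symm.trans hβ₂.1)
  have hTcard : ∀ m ∈ M, (T m).ncard = (U m).ncard := by
    intro m hmM
    rw [hTU m hmM, Set.ncard_image_of_injective _ Subtype.val_injective]
  calc S.ncard = ∑ m ∈ M, (U m).ncard := by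
        rw [hcards]; exact Finset.sum_congr rfl hTcard
    _ = ∑ d ∈ n.divisors.filter (fun d => Odd d), (U (n / d)).ncard := by
        refine (Finset.sum_nbij' (fun m => n / m) (fun d => n / d) ?_ ?_ ?_ ?_ ?_).symm
        · intro d hd
          have hd' := Finset.mem_filter.mp hd
          have hddvd := (Nat.mem_divisors.mp hd'.1).1
          refine Finset.mem_filter.mpr ⟨Nat.mem_divisors.mpr ⟨Nat.div_dvd_of_dvd hddvd, hn0⟩, ?_⟩
          rw [Nat.div_div_self hddvd hn0]
          exact hd'.2
        · intro m hm
          have hm' := Finset.mem_filter.mp hm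
          have hmdvd := (Nat.mem_divisors.mp hm'.1).1
          exact Finset.mem_filter.mpr
            ⟨Nat.mem_divisors.mpr ⟨Nat.div_dvd_of_dvd hmdvd, hn0⟩, hm'.2⟩
        · intro d hd
          exact Nat.div_div_self (Nat.mem_divisors.mp (Finset.mem_filter.mp hd).1).1 hn0
        · intro m hm
          exact Nat.div_div_self (Nat.mem_divisors.mp (Finset.mem_filter.mp hm).1).1 hn0
        · intro d _
          rfl
    _ = ∑ d ∈ n.divisors.filter (fun d => Odd d),
          {β : Km (n / d) | (minpoly F (β : E)).natDegree = n / d ∧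
            ((g.map (algebraMap F (Km (n / d)))
                - C β * h.map (algebraMap F (Km (n / d)))).natDegree = 2) ∧
            Irreducible (g.map (algebraMap F (Km (n / d)))
                - C β * h.map (algebraMap F (Km (n / d))))}.ncard :=
      Finset.sum_congr rfl fun d _ => rfl
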